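/- Let X : [0,∞) → ℝ be a continuous function with X(0) = x ≥ 0, and define the reflected path R(t) = X(t) - inf_{0 ≤ s ≤ t} min(X(s), 0). Then for every t ≥ 0, R(t) - inf_{0 ≤ s ≤ t} R(s) = X(t) - inf_{0 ≤ s ≤ t} X(s). -/

import Mathlib

/-- for a continuous path `X` with `X 0 = x ≥ 0` and its one-sided Skorokhod
reflection `R t = X t - inf_{0≤s≤t} min (X s) 0`, one has
`R t - inf_{0≤s≤t} R s = X t - inf_{0≤s≤t} X s` for all `t ≥ 0`. -/
theorem stmt_2 (X : ℝ → ℝ) (hX : ContinuousOn X (Set.Ici 0))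
    (x : ℝ) (hx : 0 ≤ x) (hX0 : X 0 = x)
    (R : ℝ → ℝ)
    (hR : ∀ t, R t = X t - sInf ((fun s => min (X s) 0) '' Set.Icc 0 t)) :
    ∀ t ≥ (0 : ℝ), R t - sInf (R '' Set.Icc 0 t) = X t - sInf (X '' Set.Icc 0 t) := by
  intro t ht
  set m : ℝ → ℝ := fun s => sInf ((fun u => min (X u) 0) '' Set.Icc 0 s) with hm
  have hR' : ∀ s, R s = X s - m s := fun s => hR s
  have hXmin : ContinuousOn (fun u => min (X u) 0) (Set.Ici 0) :=
    hX.inf continuousOn_const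
  have hcm : ∀ s : ℝ, 0 ≤ s → IsCompact ((fun u => min (X u) 0) '' Set.Icc 0 s) := fun s hs =>
    isCompact_Icc.image_of_continuousOn (hXmin.mono Set.Icc_subset_Ici_self)
  have hbdd : ∀ s : ℝ, 0 ≤ s → BddBelow ((fun u => min (X u) 0) '' Set.Icc 0 s) := fun s hs =>
    (hcm s hs).bddBelow
  have hne : ∀ s : ℝ, 0 ≤ s → ((fun u => min (X u) 0) '' Set.Icc 0 s).Nonempty := fun s hs =>
    (Set.nonempty_Icc.mpr hs).image _
  have hmle : ∀ s : ℝ, 0 ≤ s → m s ≤ X s := by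
    intro s hs
    calc m s ≤ min (X s) 0 := csInf_le (hbdd s hs) ⟨s, ⟨hs, le_refl s⟩, rfl⟩
    _ ≤ X s := min_le_left _ _
  have hmanti : ∀ s ∈ Set.Icc (0:ℝ) t, m t ≤ m s := by
    intro s hs
    exact csInf_le_csInf (hbdd t ht) (hne s hs.1)
      (Set.image_mono (Set.Icc_subset_Icc le_rfl hs.2))
  have key : sInf (R '' Set.Icc 0 t) = sInf (X '' Set.Icc 0 t) - m t := by
    by_cases hcase : ∀ s ∈ Set.Icc (0:ℝ) t, 0 ≤ X s
    · have hm0 : ∀ s ∈ Set.Icc (0:ℝ) t, m s = 0 := by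
        intro s hs
        have himg : (fun u => min (X u) 0) '' Set.Icc 0 s = {0} := by
          apply Set.eq_singleton_iff_nonempty_unique_mem.mpr
          refine ⟨hne s hs.1, ?_⟩
          rintro y ⟨u, hu, rfl⟩
          exact min_eq_right (hcase u ⟨hu.1, hu.2.trans hs.2⟩)
        have : m s = sInf ({0} : Set ℝ) := by rw [hm]; simp only; rw [himg]
        simpa using this
      have himgeq : R '' Set.Icc 0 t = X '' Set.Icc 0 t := by
        apply Set.image_congr
        intro a ha
        rw [hR' a, hm0 a ha, sub_zero]
      rw [himgeq, hm0 t ⟨ht, le_refl t⟩, sub_zero]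
    · push_neg at hcase
      obtain ⟨s0, hs0, hs0neg⟩ := hcase
      obtain ⟨w, hw, hwmin⟩ := isCompact_Icc.exists_isMinOn (Set.nonempty_Icc.mpr ht)
        (hX.mono Set.Icc_subset_Ici_self)
      have hXw_neg : X w < 0 := lt_of_le_of_lt (hwmin hs0) hs0neg
      have hmt : m t = X w := by
        apply le_antisymm
        · exact csInf_le (hbdd t ht) ⟨w, hw, min_eq_left hXw_neg.le⟩
        · apply le_csInf (hne t ht)
          rintro y ⟨u, hu, rfl⟩
          exact le_min (hwmin hu) hXw_neg.le
      have hsX : sInf (X '' Set.Icc 0 t) = X w := by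
        apply le_antisymm
        · exact csInf_le (isCompact_Icc.image_of_continuousOn
            (hX.mono Set.Icc_subset_Ici_self)).bddBelow ⟨w, hw, rfl⟩
        · apply le_csInf ((Set.nonempty_Icc.mpr ht).image _)
          rintro y ⟨u, hu, rfl⟩
          exact hwmin hu
      have hRnn : ∀ y ∈ R '' Set.Icc 0 t, (0:ℝ) ≤ y := by
        rintro y ⟨u, hu, rfl⟩
        rw [hR' u]
        exact sub_nonneg.mpr (hmle u hu.1)
      have hmw : m w = X w := le_antisymm (hmle w hw.1) (hmt ▸ hmanti w hw)
      have hRw : R w = 0 := by rw [hR' w, hmw, sub_self]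
      have hsR : sInf (R '' Set.Icc 0 t) = 0 := by
        apply le_antisymm
        · exact csInf_le ⟨0, hRnn⟩ ⟨w, hw, hRw⟩
        · exact le_csInf ((Set.nonempty_Icc.mpr ht).image _) hRnn
      rw [hsR, hsX, hmt, sub_self]
  rw [hR' t, key]
  ring
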